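/- Every graph in the family 𝔗′ (the graphs with no locally irregular coloring: odd-length paths, odd-length cycles, and the recursively defined triangle-based family 𝔗) is a cactus; in particular, every member of 𝔗 contains no two cycles sharing more than one vertex. -/

import Mathlib

open SimpleGraph

/-- `v` has degree 2 in `G` and lies on a triangle of `G`. -/
def OnTriangleDeg2 {V : Type} (G : SimpleGraph V) (v : V) : Prop :=
  ∃ a b, a ≠ b ∧ G.Adj v a ∧ G.Adj v b ∧ G.Adj a b ∧ ∀ c, G.Adj v c → c = a ∨ c = b

/-- The graph obtained from `G` by attaching at `v` a path of length `m`
(`m` new vertices `inr 0, …, inr (m-1)`). -/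
def attachPath {V : Type} (G : SimpleGraph V) (v : V) (m : ℕ) : SimpleGraph (V ⊕ Fin m) :=
  SimpleGraph.fromRel fun a b =>
    (∃ x y, a = Sum.inl x ∧ b = Sum.inl y ∧ G.Adj x y) ∨
    (∃ i : Fin m, i.val = 0 ∧ a = Sum.inl v ∧ b = Sum.inr i) ∨
    (∃ i j : Fin m, i.val + 1 = j.val ∧ a = Sum.inr i ∧ b = Sum.inr j)

/-- The graph obtained from `G` by attaching at `v` a path of length `m` whose other
endpoint is a vertex of a new triangle (formed with the two new vertices `inr (inr 0)`,
`inr (inr 1)`). -/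
def attachPathTriangle {V : Type} (G : SimpleGraph V) (v : V) (m : ℕ) :
    SimpleGraph (V ⊕ (Fin m ⊕ Fin 2)) :=
  SimpleGraph.fromRel fun a b =>
    (∃ x y, a = Sum.inl x ∧ b = Sum.inl y ∧ G.Adj x y) ∨
    (∃ i : Fin m, i.val = 0 ∧ a = Sum.inl v ∧ b = Sum.inr (Sum.inl i)) ∨
    (∃ i j : Fin m, i.val + 1 = j.val ∧ a = Sum.inr (Sum.inl i) ∧ b = Sum.inr (Sum.inl j)) ∨
    (∃ i : Fin m, i.val = m - 1 ∧ ∃ t : Fin 2, a = Sum.inr (Sum.inl i) ∧ b = Sum.inr (Sum.inr t)) ∨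
    (a = Sum.inr (Sum.inr 0) ∧ b = Sum.inr (Sum.inr 1))

/-- The recursively defined family `𝔗`: it contains the triangle `K₃`, is closed under
isomorphism, and is closed under identifying a degree-2 vertex lying on a triangle with an
endpoint of a path of even (positive) length, or with an endpoint of a path of odd length
whose other endpoint is a vertex of a new triangle. -/
inductive InT : (V : Type) → SimpleGraph V → Prop
  | base : InT (Fin 3) ⊤
  | iso {V W : Type} {G : SimpleGraph V} {H : SimpleGraph W} :
      InT V G → Nonempty (G ≃g H) → InT W H
  | evenPath {V : Type} {G : SimpleGraph V} (v : V) (m : ℕ) :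
      InT V G → 0 < m → Even m → OnTriangleDeg2 G v → InT (V ⊕ Fin m) (attachPath G v m)
  | oddPathTriangle {V : Type} {G : SimpleGraph V} (v : V) (m : ℕ) :
      InT V G → Odd m → OnTriangleDeg2 G v →
      InT (V ⊕ (Fin m ⊕ Fin 2)) (attachPathTriangle G v m)

/-- The family `𝔗′`: members of `𝔗`, odd-length paths (paths on an even number `n ≥ 2` of
vertices) and odd-length cycles. -/
def InT' (V : Type) (G : SimpleGraph V) : Prop :=
  InT V G ∨
  (∃ n, Even n ∧ 2 ≤ n ∧ Nonempty (G ≃g pathGraph n)) ∨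
  (∃ n, Odd n ∧ 3 ≤ n ∧ Nonempty (G ≃g cycleGraph n))

/-- No two distinct cycles of `G` share more than one vertex. -/
def NoTwoCyclesShare {V : Type} (G : SimpleGraph V) : Prop :=
  ∀ (u v : V) (p : G.Walk u u) (q : G.Walk v v), p.IsCycle → q.IsCycle →
    {e | e ∈ p.edges} ≠ {e | e ∈ q.edges} →
    ({x | x ∈ p.support} ∩ {x | x ∈ q.support}).ncard ≤ 1



section Core
variable {U : Type} {H : SimpleGraph U}

lemma two_nbrs_start {u : U} {p : H.Walk u u} (hp : p.IsCycle) :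
    ∃ a b, a ≠ b ∧ s(u, a) ∈ p.edges ∧ s(u, b) ∈ p.edges := by
  cases p with
  | nil => exact absurd rfl hp.ne_nil
  | @cons _ x _ h q =>
    have hq3 : 2 ≤ q.length := by
      have := hp.three_le_length
      simp only [Walk.length_cons] at this; omega
    have hqn : ¬ q.reverse.Nil := by
      rw [Walk.not_nil_iff_lt_length, Walk.length_reverse]; omega
    obtain ⟨y, hadj, q'', hq'⟩ := Walk.not_nil_iff.mp hqn
    have hqe : q.edges = q''.edges.reverse ++ [s(u, y)] := by
      have h1 : q.edges.reverse = s(u, y) :: q''.edges := by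
        rw [← Walk.edges_reverse, hq', Walk.edges_cons]
      have h2 := congrArg List.reverse h1
      simpa using h2
    have hnodup : (s(u, x) :: q.edges).Nodup := by
      have := hp.isTrail.edges_nodup
      rwa [Walk.edges_cons] at this
    refine ⟨x, y, ?_, by simp, ?_⟩
    · rintro rfl
      have hmem : s(u, x) ∈ q.edges := by rw [hqe]; simp
      exact (List.nodup_cons.mp hnodup).1 hmem
    · rw [Walk.edges_cons, hqe]; simp

lemma two_nbrs {u w : U} {p : H.Walk u u} (hp : p.IsCycle) (hw : w ∈ p.support) :
    ∃ a b, a ≠ b ∧ s(w, a) ∈ p.edges ∧ s(w, b) ∈ p.edges := by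
  classical
  obtain ⟨a, b, hab, ha, hb⟩ := two_nbrs_start (hp.rotate hw)
  exact ⟨a, b, hab, (p.rotate_edges _ hw).mem_iff.mp ha, (p.rotate_edges _ hw).mem_iff.mp hb⟩

open Classical in
lemma crossings_mod_two (S : Set U) {a b : U} (p : H.Walk a b) :
    (p.darts.countP fun d => decide (d.toProd.1 ∈ S) != decide (d.toProd.2 ∈ S)) % 2
      = if (a ∈ S) ↔ (b ∈ S) then 0 else 1 := by
  induction p with
  | nil => simp
  | @cons u c w h q ih =>
    rw [Walk.darts_cons, List.countP_cons]
    by_cases h1 : u ∈ S <;> by_cases h2 : c ∈ S <;> by_cases h3 : w ∈ S <;>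
      simp [h1, h2, h3] at ih ⊢ <;> omega

lemma walk_stay {S : Set U} :
    ∀ {a b : U} (p : H.Walk a b), (∀ d ∈ p.darts, ((d.toProd.1 ∈ S) ↔ (d.toProd.2 ∈ S))) →
      a ∈ S → ∀ c ∈ p.support, c ∈ S := by
  intro a b p
  induction p with
  | nil => intro _ ha c hc; simp at hc; subst hc; exact ha
  | @cons u v w h q ih =>
    intro hd hu c hc
    have hv : v ∈ S := (hd ⟨(u, v), h⟩ (by simp [Walk.darts_cons])).mp hu
    rw [Walk.support_cons] at hc
    rcases List.mem_cons.mp hc with rfl | hc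
    · exact hu
    · exact ih (fun d hd' => hd d (by simp [Walk.darts_cons, hd'])) hv c hc

open Classical in
lemma trail_stay {S : Set U} {e₀ : Sym2 U}
    (hcut : ∀ x y, H.Adj x y → x ∈ S → y ∉ S → s(x, y) = e₀)
    {u : U} (p : H.Walk u u) (hp : p.IsTrail) (hu : u ∈ S) :
    ∀ c ∈ p.support, c ∈ S := by
  have key : ∀ d ∈ p.darts, ((d.toProd.1 ∈ S) ↔ (d.toProd.2 ∈ S)) := by
    by_contra hcon
    push_neg at hcon
    obtain ⟨d, hd, hdx⟩ := hcon
    have hcross : ∀ d' ∈ p.darts,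
        ((fun d'' : H.Dart => decide (d''.toProd.1 ∈ S) != decide (d''.toProd.2 ∈ S)) d') = true →
        (d'.edge == e₀) = true := by
      intro d' _ hx
      have hx' : ¬ ((d'.toProd.1 ∈ S) ↔ (d'.toProd.2 ∈ S)) := by simpa using hx
      have hadj := d'.adj
      simp only [beq_iff_eq]
      by_cases h1 : d'.toProd.1 ∈ S
      · have h2 : d'.toProd.2 ∉ S := fun h => hx' ⟨fun _ => h, fun _ => h1⟩
        exact hcut _ _ hadj h1 h2
      · have h2 : d'.toProd.2 ∈ S := by tauto
        have := hcut _ _ hadj.symm h2 h1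
        rwa [Sym2.eq_swap] at this
    have h1 : 0 < p.darts.countP
        (fun d => decide (d.toProd.1 ∈ S) != decide (d.toProd.2 ∈ S)) := by
      rw [List.countP_pos_iff]
      refine ⟨d, hd, ?_⟩
      simp only [bne_iff_ne, ne_eq, decide_eq_decide]
      tauto
    have h2 := crossings_mod_two S p
    rw [if_pos Iff.rfl] at h2
    have h4 : p.darts.countP
        (fun d => decide (d.toProd.1 ∈ S) != decide (d.toProd.2 ∈ S)) ≤ p.edges.count e₀ := by
      rw [Walk.edges, List.count_eq_countP, List.countP_map]
      exact List.countP_mono_left hcross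
    have h5 : p.edges.count e₀ ≤ 1 := List.nodup_iff_count_le_one.mp hp.edges_nodup e₀
    omega
  exact walk_stay p key hu
end Core

section Lift

lemma setOf_mem_map {α β : Type*} (f : α → β) (l : List α) :
    {x | x ∈ l.map f} = f '' {x | x ∈ l} := by
  ext x; simp [List.mem_map, Set.mem_image]

variable {V W : Type} {G : SimpleGraph V} {H : SimpleGraph (V ⊕ W)}

lemma lift_walk (hind : ∀ x y, H.Adj (Sum.inl x) (Sum.inl y) → G.Adj x y) :
    ∀ {a b : V ⊕ W} (p : H.Walk a b) (x y : V), a = Sum.inl x → b = Sum.inl y →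
      (∀ c ∈ p.support, ∃ z, c = Sum.inl z) →
      ∃ q : G.Walk x y, p.support = q.support.map Sum.inl ∧
        p.edges = q.edges.map (Sym2.map Sum.inl) := by
  intro a b p
  induction p with
  | nil =>
    intro x y hx hy _
    subst hx
    obtain rfl : x = y := Sum.inl_injective hy
    exact ⟨Walk.nil, by simp, by simp⟩
  | @cons a c b h q ih =>
    intro x y hx hy hs
    obtain ⟨z, rfl⟩ := hs c (by simp [Walk.support_cons, q.start_mem_support])
    subst hx
    have hadj := hind x z h
    obtain ⟨q', hsup, hedg⟩ := ih z y rfl hy (fun c hc => hs c (by simp [Walk.support_cons]; tauto))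
    exact ⟨Walk.cons hadj q', by simp [Walk.support_cons, hsup], by simp [Walk.edges_cons, hedg]⟩

lemma cycle_of_lift {x : V} {p : H.Walk (Sum.inl x) (Sum.inl x)} {q : G.Walk x x}
    (hp : p.IsCycle)
    (hs : p.support = q.support.map Sum.inl) (he : p.edges = q.edges.map (Sym2.map Sum.inl)) :
    q.IsCycle := by
  refine ⟨⟨⟨?_⟩, ?_⟩, ?_⟩
  · have := hp.isTrail.edges_nodup
    rw [he] at this
    exact this.of_map _
  · intro hnil
    have h3 := hp.three_le_length
    have : p.edges.length = 0 := by rw [he, hnil]; simp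
    rw [Walk.length_edges] at this
    omega
  · have := hp.support_nodup
    rw [hs, ← List.map_tail] at this
    exact this.of_map _

lemma ncard_le_of_left (hind : ∀ x y, H.Adj (Sum.inl x) (Sum.inl y) → G.Adj x y)
    (hno : NoTwoCyclesShare G) {u w : V ⊕ W} {p : H.Walk u u} {q : H.Walk w w}
    (hp : p.IsCycle) (hq : q.IsCycle)
    (hpL : ∀ c ∈ p.support, ∃ z, c = Sum.inl z) (hqL : ∀ c ∈ q.support, ∃ z, c = Sum.inl z)
    (hne : {e | e ∈ p.edges} ≠ {e | e ∈ q.edges}) :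
    ({c | c ∈ p.support} ∩ {c | c ∈ q.support}).ncard ≤ 1 := by
  obtain ⟨xu, rfl⟩ := hpL u p.start_mem_support
  obtain ⟨xw, rfl⟩ := hqL w q.start_mem_support
  obtain ⟨p', hps, hpe⟩ := lift_walk hind p xu xu rfl rfl hpL
  obtain ⟨q', hqs, hqe⟩ := lift_walk hind q xw xw rfl rfl hqL
  have hp' := cycle_of_lift hp hps hpe
  have hq' := cycle_of_lift hq hqs hqe
  have hinj : Function.Injective (Sum.inl : V → V ⊕ W) := Sum.inl_injective
  have hne' : {e | e ∈ p'.edges} ≠ {e | e ∈ q'.edges} := by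
    intro hEq
    apply hne
    rw [hpe, hqe, setOf_mem_map, setOf_mem_map, hEq]
  have hmain := hno xu xw p' q' hp' hq' hne'
  rw [hps, hqs, setOf_mem_map, setOf_mem_map, ← Set.image_inter hinj,
    Set.ncard_image_of_injective _ hinj]
  exact hmain

end Lift

section IsoTransfer
variable {V W : Type} {G : SimpleGraph V} {H : SimpleGraph W}

lemma share_iso (e : G ≃g H) (hno : NoTwoCyclesShare G) : NoTwoCyclesShare H := by
  intro u v p q hp hq hne
  let f : H →g G := e.symm.toHom
  have hinj : Function.Injective (⇑f : W → V) := fun a b hab => by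
    have : e.symm a = e.symm b := hab
    exact e.symm.toEquiv.injective this
  have hpc : (p.map f).IsCycle :=
    ((Walk.map_isCycle_iff_of_injective (by exact hinj)).mpr hp)
  have hqc : (q.map f).IsCycle :=
    ((Walk.map_isCycle_iff_of_injective (by exact hinj)).mpr hq)
  have hcomp : (⇑e ∘ ⇑f) = id := funext fun w => e.apply_symm_apply w
  have hid : ∀ z : Sym2 W, Sym2.map ⇑e (Sym2.map ⇑f z) = z := by
    intro z
    rw [Sym2.map_map, hcomp, Sym2.map_id, id_eq]
  have hne' : {e' | e' ∈ (p.map f).edges} ≠ {e' | e' ∈ (q.map f).edges} := by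
    intro hEq
    apply hne
    have h1 : {e' | e' ∈ p.edges} = Sym2.map ⇑e '' {e' | e' ∈ (p.map f).edges} := by
      rw [Walk.edges_map, setOf_mem_map, ← Set.image_comp]
      ext z; constructor
      · intro hz; exact ⟨z, hz, hid z⟩
      · rintro ⟨z', hz', rfl⟩; rw [Function.comp_apply, hid]; exact hz'
    have h2 : {e' | e' ∈ q.edges} = Sym2.map ⇑e '' {e' | e' ∈ (q.map f).edges} := by
      rw [Walk.edges_map, setOf_mem_map, ← Set.image_comp]
      ext z; constructor
      · intro hz; exact ⟨z, hz, hid z⟩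
      · rintro ⟨z', hz', rfl⟩; rw [Function.comp_apply, hid]; exact hz'
    rw [h1, h2, hEq]
  have hmain := hno _ _ (p.map f) (q.map f) hpc hqc hne'
  rw [Walk.support_map, Walk.support_map, setOf_mem_map, setOf_mem_map,
    ← Set.image_inter hinj, Set.ncard_image_of_injective _ hinj] at hmain
  exact hmain

end IsoTransfer

section AttachPath
variable {V : Type} {G : SimpleGraph V} {v : V} {m : ℕ}

lemma cut_compl {U : Type} {H : SimpleGraph U} {S : Set U} {e₀ : Sym2 U}
    (hcut : ∀ x y, H.Adj x y → x ∈ S → y ∉ S → s(x, y) = e₀) :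
    ∀ x y, H.Adj x y → x ∈ Sᶜ → y ∉ Sᶜ → s(x, y) = e₀ := by
  intro x y hadj hx hy
  rw [Sym2.eq_swap]
  exact hcut y x hadj.symm (not_not.mp hy) hx

lemma attachPath_adj_inl {x y : V} (h : (attachPath G v m).Adj (Sum.inl x) (Sum.inl y)) :
    G.Adj x y := by
  rw [attachPath, fromRel_adj] at h
  obtain ⟨-, h | h⟩ := h <;>
    rcases h with ⟨x', y', hx, hy, hadj⟩ | ⟨i, -, -, hy⟩ | ⟨i, j, -, hx, -⟩
  · obtain rfl := Sum.inl_injective hx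
    obtain rfl := Sum.inl_injective hy
    exact hadj
  · simp at hy
  · simp at hx
  · obtain rfl := Sum.inl_injective hx
    obtain rfl := Sum.inl_injective hy
    exact hadj.symm
  · simp at hy
  · simp at hx

lemma attachPath_adj_inr {i : Fin m} {c : V ⊕ Fin m}
    (h : (attachPath G v m).Adj (Sum.inr i) c) :
    (c = Sum.inl v ∧ i.val = 0) ∨
      ∃ j : Fin m, c = Sum.inr j ∧ (i.val + 1 = j.val ∨ j.val + 1 = i.val) := by
  rw [attachPath, fromRel_adj] at h
  obtain ⟨-, h | h⟩ := h
  · rcases h with ⟨x, y, hx, -, -⟩ | ⟨j, -, hx, -⟩ | ⟨j, k, hjk, hx, hy⟩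
    · simp at hx
    · simp at hx
    · obtain rfl := Sum.inr_injective hx
      exact Or.inr ⟨k, hy, Or.inl hjk⟩
  · rcases h with ⟨x, y, -, hy, -⟩ | ⟨j, hj0, hc, hy⟩ | ⟨j, k, hjk, hc, hy⟩
    · simp at hy
    · obtain rfl := Sum.inr_injective hy
      exact Or.inl ⟨hc, hj0⟩
    · obtain rfl := Sum.inr_injective hy
      exact Or.inr ⟨j, hc, Or.inr hjk⟩

lemma attachPath_cut (hm : 0 < m) :
    ∀ a b, (attachPath G v m).Adj a b → a ∈ Set.range (Sum.inl : V → V ⊕ Fin m) →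
      b ∉ Set.range (Sum.inl : V → V ⊕ Fin m) →
      s(a, b) = s(Sum.inl v, Sum.inr (⟨0, hm⟩ : Fin m)) := by
  rintro a b hadj ⟨x, rfl⟩ hb
  rcases b with y | i
  · exact absurd ⟨y, rfl⟩ hb
  rw [attachPath, fromRel_adj] at hadj
  obtain ⟨-, h | h⟩ := hadj
  · rcases h with ⟨x', y', -, hy, -⟩ | ⟨j, hj0, hx, hy⟩ | ⟨j, k, -, hx, -⟩
    · simp at hy
    · obtain rfl := Sum.inl_injective hx
      obtain rfl := Sum.inr_injective hy
      have : i = ⟨0, hm⟩ := Fin.val_injective hj0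
      rw [this]
    · simp at hx
  · rcases h with ⟨x', y', hx, -, -⟩ | ⟨j, -, hx, -⟩ | ⟨j, k, -, -, hy⟩
    · simp at hx
    · simp at hx
    · simp at hy

lemma attachPath_cycles {u : V ⊕ Fin m} (p : (attachPath G v m).Walk u u) (hp : p.IsCycle) :
    ∀ c ∈ p.support, ∃ z, c = Sum.inl z := by
  classical
  rcases Nat.eq_zero_or_pos m with rfl | hm
  · intro c hc
    rcases c with z | i
    · exact ⟨z, rfl⟩
    · exact i.elim0
  rcases u with xu | iu
  · have hstay := trail_stay (attachPath_cut hm) p hp.isTrail ⟨xu, rfl⟩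
    intro c hc
    obtain ⟨z, hz⟩ := hstay c hc
    exact ⟨z, hz.symm⟩
  · exfalso
    have hstay := trail_stay (cut_compl (attachPath_cut hm)) p hp.isTrail
      (by simp : Sum.inr iu ∈ (Set.range (Sum.inl : V → V ⊕ Fin m))ᶜ)
    let P : ℕ → Prop := fun k => ∃ hk : k < m, Sum.inr (⟨k, hk⟩ : Fin m) ∈ p.support
    have hex : ∃ k : ℕ, P k := ⟨iu.val, iu.isLt, by simpa using p.start_mem_support⟩
    haveI : DecidablePred P := fun _ => Classical.propDecidable _
    obtain ⟨hk, hmem⟩ := Nat.find_spec hex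
    obtain ⟨a, b, hab, ha, hb⟩ := two_nbrs hp hmem
    have key : ∀ c, s(Sum.inr (⟨Nat.find hex, hk⟩ : Fin m), c) ∈ p.edges →
        ∃ j : Fin m, c = Sum.inr j ∧ j.val = Nat.find hex + 1 := by
      intro c hc
      have hadj := p.adj_of_mem_edges hc
      have hcs := p.snd_mem_support_of_mem_edges hc
      rcases attachPath_adj_inr hadj with ⟨rfl, -⟩ | ⟨j, rfl, hj⟩
      · exact absurd (hstay _ hcs) (by simp)
      · rcases hj with hj | hj
        · exact ⟨j, rfl, by simp at hj ⊢; omega⟩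
        · exfalso
          have hjlt : j.val < Nat.find hex := by simp at hj; omega
          exact Nat.find_min hex hjlt ⟨j.isLt, by simpa using hcs⟩
    obtain ⟨ja, rfl, hja⟩ := key a ha
    obtain ⟨jb, rfl, hjb⟩ := key b hb
    exact hab (by rw [show ja = jb from Fin.val_injective (by omega)])

lemma attachPath_adj_inl_intro {x y : V} (h : G.Adj x y) :
    (attachPath G v m).Adj (Sum.inl x) (Sum.inl y) := by
  rw [attachPath, fromRel_adj]
  exact ⟨by simp [h.ne], Or.inl (Or.inl ⟨x, y, rfl, rfl, h⟩)⟩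

lemma attachPath_connected (hG : G.Connected) : (attachPath G v m).Connected := by
  let hhom : G →g attachPath G v m := ⟨Sum.inl, fun h => attachPath_adj_inl_intro h⟩
  have hpath : ∀ (k : ℕ) (hk : k < m),
      (attachPath G v m).Reachable (Sum.inr ⟨k, hk⟩) (Sum.inl v) := by
    intro k
    induction k with
    | zero =>
      intro hk
      have : (attachPath G v m).Adj (Sum.inl v) (Sum.inr ⟨0, hk⟩) := by
        rw [attachPath, fromRel_adj]
        exact ⟨by simp, Or.inl (Or.inr (Or.inl ⟨⟨0, hk⟩, rfl, rfl, rfl⟩))⟩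
      exact this.symm.reachable
    | succ k ih =>
      intro hk
      have hlt : k < m := by omega
      have : (attachPath G v m).Adj (Sum.inr ⟨k, hlt⟩) (Sum.inr ⟨k + 1, hk⟩) := by
        rw [attachPath, fromRel_adj]
        refine ⟨by simp only [ne_eq, Sum.inr.injEq, Fin.mk.injEq]; omega,
          Or.inl (Or.inr (Or.inr ⟨⟨k, hlt⟩, ⟨k + 1, hk⟩, rfl, rfl, rfl⟩))⟩
      exact this.symm.reachable.trans (ih hlt)
  have hall : ∀ c, (attachPath G v m).Reachable c (Sum.inl v) := by
    intro c
    rcases c with x | i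
    · exact Reachable.map hhom (hG x v)
    · exact hpath i.val i.isLt
  haveI : Nonempty (V ⊕ Fin m) := ⟨Sum.inl v⟩
  exact ⟨fun a b => (hall a).trans (hall b).symm⟩

end AttachPath
section AttachPT
variable {V : Type} {G : SimpleGraph V} {v : V} {m : ℕ}

lemma PT_adj_inl {x y : V} (h : (attachPathTriangle G v m).Adj (Sum.inl x) (Sum.inl y)) :
    G.Adj x y := by
  rw [attachPathTriangle, fromRel_adj] at h
  obtain ⟨-, h | h⟩ := h <;>
    rcases h with ⟨x', y', hx, hy, hadj⟩ | ⟨i, hi, hx, hy⟩ | ⟨i, j, hij, hx, hy⟩ |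
      ⟨i, hi, t, hx, hy⟩ | ⟨hx, hy⟩
  · obtain rfl := Sum.inl_injective hx
    obtain rfl := Sum.inl_injective hy
    exact hadj
  · simp at hy
  · simp at hx
  · simp at hx
  · simp at hx
  · obtain rfl := Sum.inl_injective hx
    obtain rfl := Sum.inl_injective hy
    exact hadj.symm
  · simp at hy
  · simp at hx
  · simp at hx
  · simp at hx

lemma PT_adj_pathvert {i : Fin m} {c : V ⊕ (Fin m ⊕ Fin 2)}
    (h : (attachPathTriangle G v m).Adj (Sum.inr (Sum.inl i)) c) :
    (c = Sum.inl v ∧ i.val = 0) ∨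
      (∃ j : Fin m, c = Sum.inr (Sum.inl j) ∧ (i.val + 1 = j.val ∨ j.val + 1 = i.val)) ∨
      (i.val = m - 1 ∧ ∃ t : Fin 2, c = Sum.inr (Sum.inr t)) := by
  rw [attachPathTriangle, fromRel_adj] at h
  obtain ⟨-, h | h⟩ := h
  · rcases h with ⟨x', y', hx, hy, hadj⟩ | ⟨j, hj, hx, hy⟩ | ⟨j, k, hjk, hx, hy⟩ |
      ⟨j, hj, t, hx, hy⟩ | ⟨hx, hy⟩
    · simp at hx
    · simp at hx
    · obtain rfl := Sum.inl_injective (Sum.inr_injective hx)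
      exact Or.inr (Or.inl ⟨k, hy, Or.inl hjk⟩)
    · obtain rfl := Sum.inl_injective (Sum.inr_injective hx)
      exact Or.inr (Or.inr ⟨hj, t, hy⟩)
    · simp at hx
  · rcases h with ⟨x', y', hx, hy, hadj⟩ | ⟨j, hj, hx, hy⟩ | ⟨j, k, hjk, hx, hy⟩ |
      ⟨j, hj, t, hx, hy⟩ | ⟨hx, hy⟩
    · simp at hy
    · obtain rfl := Sum.inl_injective (Sum.inr_injective hy)
      exact Or.inl ⟨hx, hj⟩
    · obtain rfl := Sum.inl_injective (Sum.inr_injective hy)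
      exact Or.inr (Or.inl ⟨j, hx, Or.inr hjk⟩)
    · simp at hy
    · simp at hy

lemma PT_cut (hm : 0 < m) :
    ∀ a b, (attachPathTriangle G v m).Adj a b →
      a ∈ Set.range (Sum.inl : V → V ⊕ (Fin m ⊕ Fin 2)) →
      b ∉ Set.range (Sum.inl : V → V ⊕ (Fin m ⊕ Fin 2)) →
      s(a, b) = s(Sum.inl v, Sum.inr (Sum.inl (⟨0, hm⟩ : Fin m))) := by
  rintro a b hadj ⟨x, rfl⟩ hb
  rcases b with y | i
  · exact absurd ⟨y, rfl⟩ hb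
  rw [attachPathTriangle, fromRel_adj] at hadj
  obtain ⟨-, h | h⟩ := hadj
  · rcases h with ⟨x', y', hx, hy, hadj⟩ | ⟨j, hj, hx, hy⟩ | ⟨j, k, hjk, hx, hy⟩ |
      ⟨j, hj, t, hx, hy⟩ | ⟨hx, hy⟩
    · simp at hy
    · obtain rfl := Sum.inl_injective hx
      obtain rfl := Sum.inr_injective hy
      have : j = ⟨0, hm⟩ := Fin.val_injective hj
      rw [this]
    · simp at hx
    · simp at hx
    · simp at hx
  · rcases h with ⟨x', y', hx, hy, hadj⟩ | ⟨j, hj, hx, hy⟩ | ⟨j, k, hjk, hx, hy⟩ |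
      ⟨j, hj, t, hx, hy⟩ | ⟨hx, hy⟩
    · simp at hx
    · simp at hx
    · simp at hy
    · simp at hy
    · simp at hy

lemma PT_cycles (hm : 0 < m) {u : V ⊕ (Fin m ⊕ Fin 2)}
    (p : (attachPathTriangle G v m).Walk u u) (hp : p.IsCycle) :
    (∀ c ∈ p.support, ∃ z, c = Sum.inl z) ∨
      (∀ c ∈ p.support,
        c = Sum.inr (Sum.inl (⟨m - 1, by omega⟩ : Fin m)) ∨
        c = Sum.inr (Sum.inr 0) ∨ c = Sum.inr (Sum.inr 1)) := by
  classical
  rcases u with xu | iu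
  · left
    have hstay := trail_stay (PT_cut hm) p hp.isTrail ⟨xu, rfl⟩
    intro c hc
    obtain ⟨z, hz⟩ := hstay c hc
    exact ⟨z, hz.symm⟩
  · right
    have hstay := trail_stay (cut_compl (PT_cut hm)) p hp.isTrail
      (by simp : Sum.inr iu ∈ (Set.range (Sum.inl : V → V ⊕ (Fin m ⊕ Fin 2)))ᶜ)
    have hpathv : ∀ (k : ℕ) (hk : k < m), Sum.inr (Sum.inl (⟨k, hk⟩ : Fin m)) ∈ p.support →
        k = m - 1 := by
      intro k hk hmemk
      by_contra hne
      have hklt : k < m - 1 := by omega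
      let P : ℕ → Prop := fun k' => ∃ hk' : k' < m, Sum.inr (Sum.inl (⟨k', hk'⟩ : Fin m)) ∈ p.support
      have hex : ∃ k', P k' := ⟨k, hk, hmemk⟩
      haveI : DecidablePred P := fun _ => Classical.propDecidable _
      obtain ⟨hk₀, hmem₀⟩ := Nat.find_spec hex
      have hk₀lt : Nat.find hex < m - 1 := by
        have := Nat.find_min' hex ⟨hk, hmemk⟩
        omega
      obtain ⟨a, b, hab, ha, hb⟩ := two_nbrs hp hmem₀
      have key : ∀ c, s(Sum.inr (Sum.inl (⟨Nat.find hex, hk₀⟩ : Fin m)), c) ∈ p.edges →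
          ∃ j : Fin m, c = Sum.inr (Sum.inl j) ∧ j.val = Nat.find hex + 1 := by
        intro c hc
        have hadj := p.adj_of_mem_edges hc
        have hcs := p.snd_mem_support_of_mem_edges hc
        rcases PT_adj_pathvert hadj with ⟨rfl, -⟩ | ⟨j, rfl, hj⟩ | ⟨hlast, -⟩
        · exact absurd (hstay _ hcs) (by simp)
        · rcases hj with hj | hj
          · exact ⟨j, rfl, by simp at hj ⊢; omega⟩
          · exfalso
            have hjlt : j.val < Nat.find hex := by simp at hj; omega
            exact Nat.find_min hex hjlt ⟨j.isLt, by simpa using hcs⟩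
        · simp at hlast; omega
      obtain ⟨ja, rfl, hja⟩ := key a ha
      obtain ⟨jb, rfl, hjb⟩ := key b hb
      exact hab (by rw [show ja = jb from Fin.val_injective (by omega)])
    intro c hc
    rcases c with z | (j | t)
    · exact absurd (hstay _ hc) (by simp)
    · left
      have := hpathv j.val j.isLt (by simpa using hc)
      congr 2
      exact Fin.val_injective (by simpa using this)
    · have : t.val = 0 ∨ t.val = 1 := by omega
      rcases this with h | h
      · exact Or.inr (Or.inl (by congr 2; exact Fin.val_injective (by simpa using h)))
      · exact Or.inr (Or.inr (by congr 2; exact Fin.val_injective (by simpa using h)))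

lemma PT_adj_inl_intro {x y : V} (h : G.Adj x y) :
    (attachPathTriangle G v m).Adj (Sum.inl x) (Sum.inl y) := by
  rw [attachPathTriangle, fromRel_adj]
  exact ⟨by simp [h.ne], Or.inl (Or.inl ⟨x, y, rfl, rfl, h⟩)⟩

lemma PT_connected (hm : 0 < m) (hG : G.Connected) :
    (attachPathTriangle G v m).Connected := by
  let hhom : G →g attachPathTriangle G v m := ⟨Sum.inl, fun h => PT_adj_inl_intro h⟩
  have hpath : ∀ (k : ℕ) (hk : k < m),
      (attachPathTriangle G v m).Reachable (Sum.inr (Sum.inl ⟨k, hk⟩)) (Sum.inl v) := by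
    intro k
    induction k with
    | zero =>
      intro hk
      have : (attachPathTriangle G v m).Adj (Sum.inl v) (Sum.inr (Sum.inl ⟨0, hk⟩)) := by
        rw [attachPathTriangle, fromRel_adj]
        exact ⟨by simp, Or.inl (Or.inr (Or.inl ⟨⟨0, hk⟩, rfl, rfl, rfl⟩))⟩
      exact this.symm.reachable
    | succ k ih =>
      intro hk
      have hlt : k < m := by omega
      have : (attachPathTriangle G v m).Adj (Sum.inr (Sum.inl ⟨k, hlt⟩))
          (Sum.inr (Sum.inl ⟨k + 1, hk⟩)) := by
        rw [attachPathTriangle, fromRel_adj]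
        refine ⟨by simp only [ne_eq, Sum.inr.injEq, Sum.inl.injEq, Fin.mk.injEq]; omega,
          Or.inl (Or.inr (Or.inr (Or.inl ⟨⟨k, hlt⟩, ⟨k + 1, hk⟩, rfl, rfl, rfl⟩)))⟩
      exact this.symm.reachable.trans (ih hlt)
  have htri : ∀ t : Fin 2, (attachPathTriangle G v m).Adj
      (Sum.inr (Sum.inl ⟨m - 1, by omega⟩)) (Sum.inr (Sum.inr t)) := by
    intro t
    rw [attachPathTriangle, fromRel_adj]
    exact ⟨by simp, Or.inl (Or.inr (Or.inr (Or.inr (Or.inl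
      ⟨⟨m - 1, by omega⟩, rfl, t, rfl, rfl⟩))))⟩
  have hall : ∀ c, (attachPathTriangle G v m).Reachable c (Sum.inl v) := by
    intro c
    rcases c with x | (j | t)
    · exact Reachable.map hhom (hG x v)
    · have := hpath j.val j.isLt
      simpa using this
    · exact ((htri t).symm.reachable).trans (hpath (m - 1) (by omega))
  haveI : Nonempty (V ⊕ (Fin m ⊕ Fin 2)) := ⟨Sum.inl v⟩
  exact ⟨fun a b => (hall a).trans (hall b).symm⟩

end AttachPT
section Triangle
variable {U : Type} {H : SimpleGraph U}

lemma tripair {a b c : U} (hab : a ≠ b) (hac : a ≠ c) (hbc : b ≠ c) :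
    {e : Sym2 U | ∃ p q, p ∈ ({a, b, c} : Set U) ∧ q ∈ ({a, b, c} : Set U) ∧ p ≠ q ∧ e = s(p, q)}
      = {s(a, b), s(a, c), s(b, c)} := by
  ext e
  simp only [Set.mem_setOf_eq, Set.mem_insert_iff, Set.mem_singleton_iff]
  constructor
  · rintro ⟨p, q, (rfl | rfl | rfl), (rfl | rfl | rfl), hpq, rfl⟩ <;>
      first
        | exact absurd rfl hpq
        | exact Or.inl rfl
        | exact Or.inl Sym2.eq_swap
        | exact Or.inr (Or.inl rfl)
        | exact Or.inr (Or.inl Sym2.eq_swap)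
        | exact Or.inr (Or.inr rfl)
        | exact Or.inr (Or.inr Sym2.eq_swap)
  · rintro (rfl | rfl | rfl)
    · exact ⟨a, b, by simp, by simp, hab, rfl⟩
    · exact ⟨a, c, by simp, by simp, hac, rfl⟩
    · exact ⟨b, c, by simp, by simp, hbc, rfl⟩

lemma cycle_in_triple {x t0 t1 : U} (hx0 : x ≠ t0) (hx1 : x ≠ t1) (h01 : t0 ≠ t1)
    {u : U} {p : H.Walk u u} (hp : p.IsCycle)
    (hsub : ∀ c ∈ p.support, c = x ∨ c = t0 ∨ c = t1) :
    {e | e ∈ p.edges} = {s(x, t0), s(x, t1), s(t0, t1)} ∧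
      {c | c ∈ p.support} = {x, t0, t1} := by
  classical
  have h3 : 3 ≤ p.length := hp.three_le_length
  have hnd0 : p.support.tail.Nodup := hp.support_nodup
  have hlen : p.support.tail.length = p.length := by
    have h1 := p.length_support
    have h2 : p.support.tail.length = p.support.length - 1 := by simp
    omega
  have hle : p.length ≤ 3 := by
    have hcard : p.support.tail.toFinset.card = p.support.tail.length :=
      List.toFinset_card_of_nodup hnd0
    have hsubF : p.support.tail.toFinset ⊆ {x, t0, t1} := by
      intro c hc
      have hc' : c ∈ p.support := List.mem_of_mem_tail (List.mem_toFinset.mp hc)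
      rcases hsub c hc' with rfl | rfl | rfl <;> simp
    have hcle := Finset.card_le_card hsubF
    have e1 := Finset.card_insert_le x ({t0, t1} : Finset U)
    have e2 := Finset.card_insert_le t0 ({t1} : Finset U)
    rw [Finset.card_singleton] at e2
    omega
  have hlen3 : p.length = 3 := by omega
  clear h3 hle hlen hnd0
  cases p with
  | nil => simp at hlen3
  | @cons _ a _ h q =>
    cases q with
    | nil => simp at hlen3
    | @cons _ b _ h' r =>
      cases r with
      | nil => simp at hlen3
      | @cons _ c _ h'' s =>
        cases s with
        | @cons _ d _ h''' t => exfalso; simp [Walk.length_cons] at hlen3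
        | nil =>
          have hnd : (Walk.cons h (Walk.cons h' (Walk.cons h'' Walk.nil))).support.tail.Nodup :=
            hp.support_nodup
          simp only [Walk.support_cons, Walk.support_nil, List.tail_cons] at hnd
          have hau : a ≠ u := by intro hh; subst hh; simp at hnd
          have hbu : b ≠ u := by intro hh; subst hh; simp at hnd
          have hab : a ≠ b := by intro hh; subst hh; simp at hnd
          have hsupset : {c | c ∈ (Walk.cons h (Walk.cons h' (Walk.cons h'' Walk.nil))).support}
              = ({u, a, b} : Set U) := by
            ext c'
            simp [Walk.support_cons]
            tauto
          have hS : ({u, a, b} : Set U) = {x, t0, t1} := by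
            have hsub' : ({u, a, b} : Set U) ⊆ {x, t0, t1} := by
              have m1 : u ∈ (Walk.cons h (Walk.cons h' (Walk.cons h'' Walk.nil))).support := by
                simp [Walk.support_cons]
              have m2 : a ∈ (Walk.cons h (Walk.cons h' (Walk.cons h'' Walk.nil))).support := by
                simp [Walk.support_cons]
              have m3 : b ∈ (Walk.cons h (Walk.cons h' (Walk.cons h'' Walk.nil))).support := by
                simp [Walk.support_cons]
              rintro c' (rfl | rfl | rfl)
              · rcases hsub c' m1 with rfl | rfl | rfl <;> simp
              · rcases hsub c' m2 with rfl | rfl | rfl <;> simp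
              · rcases hsub c' m3 with rfl | rfl | rfl <;> simp
            have hc1 : ({u, a, b} : Set U).ncard = 3 :=
              Set.ncard_eq_three.mpr ⟨u, a, b, fun hh => hau hh.symm, fun hh => hbu hh.symm,
                hab, rfl⟩
            have e1 := Set.ncard_insert_le x ({t0, t1} : Set U)
            have e2 := Set.ncard_insert_le t0 ({t1} : Set U)
            rw [Set.ncard_singleton] at e2
            exact Set.eq_of_subset_of_ncard_le hsub' (by omega) (Set.toFinite _)
          refine ⟨?_, by rw [hsupset, hS]⟩
          have hsw : s(b, u) = s(u, b) := Sym2.eq_swap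
          calc {e | e ∈ (Walk.cons h (Walk.cons h' (Walk.cons h'' Walk.nil))).edges}
              = ({s(u, a), s(u, b), s(a, b)} : Set (Sym2 U)) := by
                ext e
                simp only [Walk.edges_cons, Walk.edges_nil, List.mem_cons,
                  List.not_mem_nil, or_false, Set.mem_setOf_eq, Set.mem_insert_iff,
                  Set.mem_singleton_iff]
                rw [hsw]
                tauto
            _ = {e : Sym2 U | ∃ p' q', p' ∈ ({u, a, b} : Set U) ∧ q' ∈ ({u, a, b} : Set U) ∧
                  p' ≠ q' ∧ e = s(p', q')} := (tripair hau.symm hbu.symm hab).symm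
            _ = {e : Sym2 U | ∃ p' q', p' ∈ ({x, t0, t1} : Set U) ∧ q' ∈ ({x, t0, t1} : Set U) ∧
                  p' ≠ q' ∧ e = s(p', q')} := by rw [hS]
            _ = {s(x, t0), s(x, t1), s(t0, t1)} := tripair hx0 hx1 h01

end Triangle
section CycleGraphLemmas
open Fin.NatCast Fin.CommRing

lemma cycleGraph_adj3 {n : ℕ} {u v : Fin (n + 3)} :
    (cycleGraph (n + 3)).Adj u v ↔ u - v = 1 ∨ v - u = 1 :=
  cycleGraph_adj (n := n + 1)

lemma fin_add_sub {n : ℕ} (a b : Fin (n + 3)) : a + (b - a) = b := by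
  abel

lemma cycleGraph_conn (n : ℕ) : (cycleGraph (n + 3)).Connected := by
  have hadj : ∀ v : Fin (n + 3), (cycleGraph (n + 3)).Adj v (v + 1) := by
    intro v
    rw [cycleGraph_adj3]
    right
    rw [add_sub_cancel_left]
  have key : ∀ (v : Fin (n + 3)) (k : ℕ), (cycleGraph (n + 3)).Reachable v (v + k) := by
    intro v k
    induction k with
    | zero => simpa using Reachable.refl v
    | succ k ih =>
      have heq : (v + (k : Fin (n + 3))) + 1 = v + ((k + 1 : ℕ) : Fin (n + 3)) := by
        push_cast
        ring
      exact ih.trans (heq ▸ (hadj (v + (k : Fin (n + 3)))).reachable)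
  constructor
  intro a b
  have := key a (b - a).val
  rwa [Fin.cast_val_eq_self, fin_add_sub] at this

lemma cycleGraph_cycle_edges {n : ℕ} {u : Fin (n + 3)} {p : (cycleGraph (n + 3)).Walk u u}
    (hp : p.IsCycle) : {e | e ∈ p.edges} = (cycleGraph (n + 3)).edgeSet := by
  have hnbr : ∀ c w : Fin (n + 3), s(w, c) ∈ p.edges → c = w - 1 ∨ c = w + 1 := by
    intro c w hc
    have hadj := p.adj_of_mem_edges hc
    rw [cycleGraph_adj3] at hadj
    rcases hadj with hh | hh
    · left
      have h1 := sub_sub_cancel w c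
      rw [hh] at h1
      exact h1.symm
    · right
      have h1 := fin_add_sub w c
      rw [hh] at h1
      exact h1.symm
  have step : ∀ w ∈ p.support, (w + 1) ∈ p.support ∧ s(w, w + 1) ∈ p.edges := by
    intro w hw
    obtain ⟨a, b, hab, ha, hb⟩ := two_nbrs hp hw
    rcases hnbr a w ha with rfl | rfl <;> rcases hnbr b w hb with rfl | rfl
    · exact absurd rfl hab
    · exact ⟨p.snd_mem_support_of_mem_edges hb, hb⟩
    · exact ⟨p.snd_mem_support_of_mem_edges ha, ha⟩
    · exact absurd rfl hab
  have hall : ∀ w : Fin (n + 3), w ∈ p.support := by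
    intro w
    have hk : ∀ k : ℕ, (u + (k : Fin (n + 3))) ∈ p.support := by
      intro k
      induction k with
      | zero => simpa using p.start_mem_support
      | succ k ih =>
        have heq : (u + (k : Fin (n + 3))) + 1 = u + ((k + 1 : ℕ) : Fin (n + 3)) := by
          push_cast; ring
        have := (step _ ih).1
        rwa [heq] at this
    have := hk (w - u).val
    rwa [Fin.cast_val_eq_self, fin_add_sub] at this
  ext e
  constructor
  · exact fun he => p.edges_subset_edgeSet he
  · intro he
    induction e with
    | _ a b =>
      rw [mem_edgeSet, cycleGraph_adj3] at he
      rcases he with hh | hh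
      · have hab : a = b + 1 := by
          have h1 := fin_add_sub b a
          rw [hh] at h1
          exact h1.symm
        subst hab
        rw [Set.mem_setOf_eq, Sym2.eq_swap]
        exact (step b (hall b)).2
      · have hab : b = a + 1 := by
          have h1 := fin_add_sub a b
          rw [hh] at h1
          exact h1.symm
        subst hab
        exact (step a (hall a)).2

lemma cycleGraph_share (n : ℕ) : NoTwoCyclesShare (cycleGraph (n + 3)) := by
  intro u v p q hp hq hne
  exact absurd ((cycleGraph_cycle_edges hp).trans (cycleGraph_cycle_edges hq).symm) hne

lemma pathGraph_acyclic (n : ℕ) : (pathGraph n).IsAcyclic := by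
  intro v p hp
  classical
  obtain ⟨w, hwmem, hmax⟩ := Finset.exists_max_image p.support.toFinset id
    ⟨v, List.mem_toFinset.mpr p.start_mem_support⟩
  obtain ⟨a, b, hab, ha, hb⟩ := two_nbrs hp (List.mem_toFinset.mp hwmem)
  have key : ∀ c, s(w, c) ∈ p.edges → c.val + 1 = w.val := by
    intro c hc
    have hadj := p.adj_of_mem_edges hc
    rw [pathGraph_adj] at hadj
    have hcs : c ∈ p.support := p.snd_mem_support_of_mem_edges hc
    have hle := hmax c (List.mem_toFinset.mpr hcs)
    simp only [id_eq] at hle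
    rw [Fin.le_def] at hle
    rcases hadj with hh | hh
    · omega
    · exact hh
  have h1 := key a ha
  have h2 := key b hb
  exact hab (Fin.val_injective (by omega))

lemma acyclic_share {V : Type} {G : SimpleGraph V} (h : G.IsAcyclic) : NoTwoCyclesShare G :=
  fun _ _ p _ hp _ _ => absurd hp (h p)

end CycleGraphLemmas
section Final
variable {V : Type} {G : SimpleGraph V} {v : V} {m : ℕ}

lemma attachPT_share (hm : 0 < m) (hno : NoTwoCyclesShare G) :
    NoTwoCyclesShare (attachPathTriangle G v m) := by
  intro u w p q hp hq hne
  rcases PT_cycles hm p hp with hpL | hpT <;> rcases PT_cycles hm q hq with hqL | hqT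
  · exact ncard_le_of_left (fun _ _ hh => PT_adj_inl hh) hno hp hq hpL hqL hne
  · have hdisj : {c | c ∈ p.support} ∩ {c | c ∈ q.support} = ∅ := by
      ext c
      simp only [Set.mem_inter_iff, Set.mem_setOf_eq, Set.mem_empty_iff_false, iff_false, not_and]
      intro hcp hcq
      obtain ⟨z, rfl⟩ := hpL c hcp
      rcases hqT _ hcq with hh | hh | hh <;> simp at hh
    rw [hdisj]
    simp
  · have hdisj : {c | c ∈ p.support} ∩ {c | c ∈ q.support} = ∅ := by
      ext c
      simp only [Set.mem_inter_iff, Set.mem_setOf_eq, Set.mem_empty_iff_false, iff_false, not_and]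
      intro hcp hcq
      obtain ⟨z, rfl⟩ := hqL c hcq
      rcases hpT _ hcp with hh | hh | hh <;> simp at hh
    rw [hdisj]
    simp
  · have h1 := cycle_in_triple (by simp) (by simp) (by simp) hp hpT
    have h2 := cycle_in_triple (by simp) (by simp) (by simp) hq hqT
    exact absurd (h1.1.trans h2.1.symm) hne

end Final

/-- Every graph in the family `𝔗′` is a cactus: it is connected and no two of its
distinct cycles share more than one vertex. -/
theorem stmt_17 (V : Type) (G : SimpleGraph V) (h : InT' V G) :
    G.Connected ∧ NoTwoCyclesShare G := by
  rcases h with hT | ⟨n, hev, hn2, ⟨e⟩⟩ | ⟨n, hodd, hn3, ⟨e⟩⟩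
  · induction hT with
    | base =>
      rw [← cycleGraph_three_eq_top]
      exact ⟨cycleGraph_conn 0, cycleGraph_share 0⟩
    | iso hT hne ih =>
      obtain ⟨e'⟩ := hne
      exact ⟨(Iso.connected_iff e').mp ih.1, share_iso e' ih.2⟩
    | evenPath v m hT hm hev htri ih =>
      exact ⟨attachPath_connected ih.1, fun u w p q hp hq hne =>
        ncard_le_of_left (fun _ _ hh => attachPath_adj_inl hh) ih.2 hp hq (attachPath_cycles p hp)
          (attachPath_cycles q hq) hne⟩
    | oddPathTriangle v m hT hodd htri ih =>
      exact ⟨PT_connected hodd.pos ih.1, attachPT_share hodd.pos ih.2⟩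
  · obtain ⟨k, rfl⟩ : ∃ k, n = k + 1 := ⟨n - 1, by omega⟩
    exact ⟨(Iso.connected_iff e).mpr (pathGraph_connected k),
      share_iso e.symm (acyclic_share (pathGraph_acyclic (k + 1)))⟩
  · obtain ⟨k, rfl⟩ : ∃ k, n = k + 3 := ⟨n - 3, by omega⟩
    exact ⟨(Iso.connected_iff e).mpr (cycleGraph_conn k), share_iso e.symm (cycleGraph_share k)⟩
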